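/- Let the state and channel of the action-dependent ISAC model be memoryless, P_{S_e^n S^n S_d^n|A^n} = ∏_{i=1}^n P_{S_{e,i} S_i S_{d,i}|A_i} and P_{Y^n Z^n|X^n S^n} = ∏_{i=1}^n P_{Y_i Z_i|X_i S_i}, and let the distortion be additive and bounded: (1/n) d_n(s^n, ŝ^n) = (1/n) Σ_{i=1}^n d(s_i, ŝ_i) with 0 ≤ d ≤ D_max < ∞. Let Ŝ = {Ŝ^n} be the reproduction process induced by an arbitrary admissible input process, and let Ŝ* = {Ŝ^{n*}} be the reproduction process induced by the memoryless input process (A*,U*,X*) (with P_{A^{n*}} = ∏_i P_{A_i*}, P_{U^{n*}|A^{n*} S_e^n} = ∏_i P_{U_i*|A_i* S_{e,i}}, P_{X^{n*}|U^{n*} S_e^n} = ∏_i P_{X_i*|U_i* S_{e,i}}) whose per-coordinate joint laws satisfy P_{S_i^{(n)} Ŝ_i^{(n)*}} = P_{S_i^{(n)} Ŝ_i^{(n)}} for every i and n, so that the pairs (S_i^{(n)}, Ŝ_i^{(n)*}) are independent across i. Then the maximal distortion satisfies D̄(S, Ŝ*) ≤ D̄(S, Ŝ), and the average distortion satisfies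 D(S, Ŝ*) = D(S, Ŝ); in fact D̄(S, Ŝ*) = limsup_n (1/n) Σ_{i=1}^n E[d(S_i^{(n)}, Ŝ_i^{(n)})] = D(S, Ŝ). -/

import Mathlib

open Filter MeasureTheory

noncomputable section

namespace ISAC

/-- `n`-length sequences over the alphabet `α`. -/
abbrev Vec (α : Type) (n : ℕ) : Type := Fin n → α

/-- Probability of a set under a `PMF`. -/
def prSet {α : Type} (p : PMF α) (s : Set α) : ENNReal :=
  ∑' a, Set.indicator s (fun x => p x) a

/-- Expectation of a real-valued function under a `PMF`. -/
def expect {α : Type} (p : PMF α) (f : α → ℝ) : ℝ :=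
  ∑' a, (p a).toReal * f a

/-- limsup in probability of a sequence `Z n` of real random variables on `(Ω n, p n)`:
`inf {a | lim_n Pr[Z n > a] = 0}`. -/
def pLimsup {Ω : ℕ → Type} (p : ∀ n, PMF (Ω n)) (Z : ∀ n, Ω n → ℝ) : ℝ :=
  sInf {a : ℝ | Tendsto (fun n => prSet (p n) {ω | a < Z n ω}) atTop (nhds 0)}

/-- liminf in probability: `sup {b | lim_n Pr[Z n < b] = 0}`. -/
def pLiminf {Ω : ℕ → Type} (p : ∀ n, PMF (Ω n)) (Z : ∀ n, Ω n → ℝ) : ℝ :=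
  sSup {b : ℝ | Tendsto (fun n => prSet (p n) {ω | Z n ω < b}) atTop (nhds 0)}

/-- Information density `log (P(x,y) / (P(x) P(y)))`. -/
def infoDensity {α β : Type} (p : PMF (α × β)) (v : α × β) : ℝ :=
  Real.log ((p v).toReal /
    (((p.map Prod.fst) v.1).toReal * ((p.map Prod.snd) v.2).toReal))

/-- Conditional information density `log (P(x,y,c) P(c) / (P(x,c) P(y,c)))`,
conditioning on the third coordinate. -/
def condInfoDensity {α β γ : Type} (p : PMF (α × β × γ)) (v : α × β × γ) : ℝ :=
  Real.log (((p v).toReal * ((p.map fun t => t.2.2) v.2.2).toReal) /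
    (((p.map fun t => (t.1, t.2.2)) (v.1, v.2.2)).toReal *
      ((p.map fun t => (t.2.1, t.2.2)) (v.2.1, v.2.2)).toReal))

/-- Spectral inf-mutual information rate. -/
def specInf {α β : ℕ → Type} (p : ∀ n, PMF (α n × β n)) : ℝ :=
  pLiminf p fun n v => (n : ℝ)⁻¹ * infoDensity (p n) v

/-- Spectral sup-mutual information rate. -/
def specSup {α β : ℕ → Type} (p : ∀ n, PMF (α n × β n)) : ℝ :=
  pLimsup p fun n v => (n : ℝ)⁻¹ * infoDensity (p n) v

/-- Spectral conditional inf-mutual information rate. -/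
def specCondInf {α β γ : ℕ → Type} (p : ∀ n, PMF (α n × β n × γ n)) : ℝ :=
  pLiminf p fun n v => (n : ℝ)⁻¹ * condInfoDensity (p n) v

/-- Spectral conditional sup-mutual information rate. -/
def specCondSup {α β γ : ℕ → Type} (p : ∀ n, PMF (α n × β n × γ n)) : ℝ :=
  pLimsup p fun n v => (n : ℝ)⁻¹ * condInfoDensity (p n) v

section General

variable {𝒜 𝒳 𝒮e 𝒮 𝒮d 𝒴 𝒵 Sh : Type}

/-- An `(n, M_n, A_n)` code for the action-dependent ISAC model: a message set `Fin M`,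
an action encoder, a message encoder (with encoder-side CSI), a decoder (with decoder-side
CSI) and a state estimator. -/
structure Code (𝒜 𝒳 𝒮e 𝒮d 𝒴 𝒵 Sh : Type) (n : ℕ) where
  M : ℕ
  hM : 0 < M
  actEnc : Fin M → Vec 𝒜 n
  enc : Fin M → Vec 𝒮e n → Vec 𝒳 n
  dec : Vec 𝒴 n × Vec 𝒮d n → Fin M
  est : Fin M → Vec 𝒮e n → Vec 𝒵 n → Vec Sh n

variable (q : ∀ n, Vec 𝒜 n → PMF (Vec 𝒮e n × Vec 𝒮 n × Vec 𝒮d n))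
  (W : ∀ n, Vec 𝒳 n × Vec 𝒮 n → PMF (Vec 𝒴 n × Vec 𝒵 n))
  (d : ∀ n, Vec 𝒮 n → Vec Sh n → ℝ)

/-- Joint law of `(M, S_e^n, S^n, S_d^n, Y^n, Z^n)` induced by a code, a uniform message,
the action-dependent state distribution `q` and the channel `W`. -/
def codeJoint {n : ℕ} (c : Code 𝒜 𝒳 𝒮e 𝒮d 𝒴 𝒵 Sh n) :
    PMF (Fin c.M × Vec 𝒮e n × Vec 𝒮 n × Vec 𝒮d n × Vec 𝒴 n × Vec 𝒵 n) :=
  haveI : Nonempty (Fin c.M) := ⟨⟨0, c.hM⟩⟩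
  (PMF.uniformOfFintype (Fin c.M)).bind fun m =>
    (q n (c.actEnc m)).bind fun t =>
      (W n (c.enc m t.1, t.2.1)).map fun yz => (m, t.1, t.2.1, t.2.2, yz.1, yz.2)

/-- Average decoding error probability of a code. -/
def Pe {n : ℕ} (c : Code 𝒜 𝒳 𝒮e 𝒮d 𝒴 𝒵 Sh n) : ℝ :=
  (prSet (codeJoint q W c) {t | c.dec (t.2.2.2.2.1, t.2.2.2.1) ≠ t.1}).toReal

/-- The (unnormalized) distortion `d_n(S^n, Sh^n)` incurred by the estimator of a code. -/
def codeDistRV {n : ℕ} (c : Code 𝒜 𝒳 𝒮e 𝒮d 𝒴 𝒵 Sh n)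
    (t : Fin c.M × Vec 𝒮e n × Vec 𝒮 n × Vec 𝒮d n × Vec 𝒴 n × Vec 𝒵 n) : ℝ :=
  d n t.2.2.1 (c.est t.1 t.2.1 t.2.2.2.2.2)

/-- `(R, D)` is average-achievable. -/
def aAchievable (R D : ℝ) : Prop :=
  ∀ ε > (0 : ℝ), ∃ c : ∀ n, Code 𝒜 𝒳 𝒮e 𝒮d 𝒴 𝒵 Sh n,
    R ≤ liminf (fun n : ℕ => (n : ℝ)⁻¹ * Real.log ((c n).M : ℝ)) atTop ∧
    limsup (fun n : ℕ => Pe q W (c n)) atTop ≤ ε ∧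
    limsup (fun n : ℕ =>
      (n : ℝ)⁻¹ * expect (codeJoint q W (c n)) (codeDistRV d (c n))) atTop ≤ D

/-- `(R, D)` is maximal-achievable. -/
def mAchievable (R D : ℝ) : Prop :=
  ∀ ε > (0 : ℝ), ∃ c : ∀ n, Code 𝒜 𝒳 𝒮e 𝒮d 𝒴 𝒵 Sh n,
    R ≤ liminf (fun n : ℕ => (n : ℝ)⁻¹ * Real.log ((c n).M : ℝ)) atTop ∧
    limsup (fun n : ℕ => Pe q W (c n)) atTop ≤ ε ∧
    pLimsup (fun n => codeJoint q W (c n))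
      (fun n t => (n : ℝ)⁻¹ * codeDistRV d (c n) t) ≤ D

/-- Capacity–distortion function under the average distortion constraint. -/
def Ca (D : ℝ) : ℝ := sSup {R | aAchievable q W d R D}

/-- Capacity–distortion function under the maximal distortion constraint. -/
def Cm (D : ℝ) : ℝ := sSup {R | mAchievable q W d R D}

/-- Joint law of `(A^n, U^n, S_e^n, S^n, S_d^n, X^n, Y^n, Z^n)` for a random process with
joint distribution `P_{A^n} P_{S_e^n S^n S_d^n|A^n} P_{U^n|A^n S_e^n} P_{X^n|U^n S_e^n}
P_{Y^n Z^n|X^n S^n}`. -/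
def procJoint {𝒰 : Type} (PA : ∀ n, PMF (Vec 𝒜 n))
    (PU : ∀ n, Vec 𝒜 n × Vec 𝒮e n → PMF (Vec 𝒰 n))
    (PX : ∀ n, Vec 𝒰 n × Vec 𝒮e n → PMF (Vec 𝒳 n)) (n : ℕ) :
    PMF (Vec 𝒜 n × Vec 𝒰 n × Vec 𝒮e n × Vec 𝒮 n × Vec 𝒮d n ×
      Vec 𝒳 n × Vec 𝒴 n × Vec 𝒵 n) :=
  (PA n).bind fun a => (q n a).bind fun t => (PU n (a, t.1)).bind fun u =>
    (PX n (u, t.1)).bind fun x =>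
      (W n (x, t.2.1)).map fun yz => (a, u, t.1, t.2.1, t.2.2, x, yz.1, yz.2)

/-- The distortion `d_n(S^n, g_n(X^n, A^n, S_e^n, Z^n))` as a function on the process tuple. -/
def procDistRV {𝒰 : Type}
    (g : ∀ n, Vec 𝒳 n → Vec 𝒜 n → Vec 𝒮e n → Vec 𝒵 n → Vec Sh n) (n : ℕ)
    (t : Vec 𝒜 n × Vec 𝒰 n × Vec 𝒮e n × Vec 𝒮 n × Vec 𝒮d n ×
      Vec 𝒳 n × Vec 𝒴 n × Vec 𝒵 n) : ℝ :=
  d n t.2.2.2.1 (g n t.2.2.2.2.2.1 t.1 t.2.2.1 t.2.2.2.2.2.2.2)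

end General

/-- `((A,U),(Y,S_d))` from the process tuple `(a,u,se,s,sd,x,y,z)`. -/
def toAUYSd {𝒜 𝒰 𝒮e 𝒮 𝒮d 𝒳 𝒴 𝒵 : Type} (t : 𝒜 × 𝒰 × 𝒮e × 𝒮 × 𝒮d × 𝒳 × 𝒴 × 𝒵) :
    (𝒜 × 𝒰) × (𝒴 × 𝒮d) :=
  ((t.1, t.2.1), (t.2.2.2.2.2.2.1, t.2.2.2.2.1))

/-- `(U,(Y,S_d))` from the process tuple. -/
def toUYSd {𝒜 𝒰 𝒮e 𝒮 𝒮d 𝒳 𝒴 𝒵 : Type} (t : 𝒜 × 𝒰 × 𝒮e × 𝒮 × 𝒮d × 𝒳 × 𝒴 × 𝒵) :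
    𝒰 × (𝒴 × 𝒮d) :=
  (t.2.1, (t.2.2.2.2.2.2.1, t.2.2.2.2.1))

/-- `(U, S_e, A)` from the process tuple (for `I(U; S_e | A)`). -/
def toUSeA {𝒜 𝒰 𝒮e 𝒮 𝒮d 𝒳 𝒴 𝒵 : Type} (t : 𝒜 × 𝒰 × 𝒮e × 𝒮 × 𝒮d × 𝒳 × 𝒴 × 𝒵) :
    𝒰 × 𝒮e × 𝒜 :=
  (t.2.1, t.2.2.1, t.1)

/-- `((A,U),(S_d,Y))` from the process tuple. -/
def toAUSdY {𝒜 𝒰 𝒮e 𝒮 𝒮d 𝒳 𝒴 𝒵 : Type} (t : 𝒜 × 𝒰 × 𝒮e × 𝒮 × 𝒮d × 𝒳 × 𝒴 × 𝒵) :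
    (𝒜 × 𝒰) × (𝒮d × 𝒴) :=
  ((t.1, t.2.1), (t.2.2.2.2.1, t.2.2.2.2.2.2.1))



lemma prSet_empty {α : Type} (p : PMF α) : prSet p (∅ : Set α) = 0 := by
  simp [prSet]

lemma prSet_univ {α : Type} (p : PMF α) : prSet p (Set.univ : Set α) = 1 := by
  simp [prSet, p.tsum_coe]

lemma prSet_ne_top {α : Type} (p : PMF α) (s : Set α) : prSet p s ≠ ⊤ := by
  have h : prSet p s ≤ 1 := by
    rw [prSet, ← p.tsum_coe]
    exact ENNReal.tsum_le_tsum fun a => by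
      by_cases h : a ∈ s <;> simp [Set.indicator_of_mem, Set.indicator_of_notMem, h]
  exact ne_top_of_le_ne_top ENNReal.one_ne_top h

lemma prSet_toReal {α : Type} [Fintype α] (p : PMF α) (s : Set α) :
    (prSet p s).toReal = ∑ a, s.indicator (fun x => (p x).toReal) a := by
  classical
  rw [prSet, tsum_fintype, ENNReal.toReal_sum (fun a _ => by
    by_cases h : a ∈ s <;> simp [Set.indicator_of_mem, Set.indicator_of_notMem, h,
      p.apply_ne_top a])]
  refine Finset.sum_congr rfl fun a _ => ?_
  by_cases h : a ∈ s <;> simp [Set.indicator_of_mem, Set.indicator_of_notMem, h]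

lemma expect_eq_sum {α : Type} [Fintype α] (p : PMF α) (f : α → ℝ) :
    expect p f = ∑ a, (p a).toReal * f a := tsum_fintype _

lemma sum_w_eq_one {α : Type} [Fintype α] (p : PMF α) : ∑ a, (p a).toReal = 1 := by
  have h1 : ∑ a, p a = 1 := by rw [← p.tsum_coe, tsum_fintype]
  rw [← ENNReal.toReal_sum (fun a _ => p.apply_ne_top a), h1, ENNReal.toReal_one]

lemma expect_le_expect {α : Type} [Fintype α] (p : PMF α) {f g : α → ℝ}
    (h : ∀ a, f a ≤ g a) : expect p f ≤ expect p g := by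
  simp only [expect_eq_sum]
  exact Finset.sum_le_sum fun a _ => mul_le_mul_of_nonneg_left (h a) ENNReal.toReal_nonneg

lemma expect_nonneg {α : Type} [Fintype α] (p : PMF α) {f : α → ℝ}
    (h : ∀ a, 0 ≤ f a) : 0 ≤ expect p f := by
  rw [expect_eq_sum]
  exact Finset.sum_nonneg fun a _ => mul_nonneg ENNReal.toReal_nonneg (h a)

lemma expect_const {α : Type} [Fintype α] (p : PMF α) (c : ℝ) :
    expect p (fun _ => c) = c := by
  rw [expect_eq_sum, ← Finset.sum_mul, sum_w_eq_one, one_mul]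

lemma expect_smul {α : Type} [Fintype α] (p : PMF α) (c : ℝ) (f : α → ℝ) :
    expect p (fun a => c * f a) = c * expect p f := by
  simp only [expect_eq_sum, Finset.mul_sum]
  exact Finset.sum_congr rfl fun a _ => by ring

lemma expect_sum {α ι : Type} [Fintype α] [Fintype ι] (p : PMF α) (F : ι → α → ℝ) :
    expect p (fun a => ∑ i, F i a) = ∑ i, expect p (F i) := by
  simp only [expect_eq_sum, Finset.mul_sum]
  exact Finset.sum_comm

lemma expect_map {α β : Type} [Fintype α] [Fintype β] (p : PMF α) (h : α → β)
    (f : β → ℝ) : expect (p.map h) f = expect p (fun a => f (h a)) := by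
  classical
  simp only [expect_eq_sum]
  have hm : ∀ b, ((p.map h) b).toReal = ∑ a, if b = h a then (p a).toReal else 0 := by
    intro b
    rw [PMF.map_apply, tsum_fintype, ENNReal.toReal_sum (fun a _ => by
      split <;> simp [p.apply_ne_top a])]
    exact Finset.sum_congr rfl fun a _ => by split <;> simp
  simp only [hm, Finset.sum_mul]
  rw [Finset.sum_comm]
  refine Finset.sum_congr rfl fun a _ => ?_
  simp only [ite_mul, zero_mul]
  rw [Finset.sum_ite_eq']
  simp

lemma sum_pi_prod {β : Type} [Fintype β] (n : ℕ) (h : Fin n → β → ℝ) :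
    ∑ v : Vec β n, ∏ k, h k (v k) = ∏ k, ∑ b, h k b := by
  classical
  rw [Finset.prod_univ_sum, Fintype.piFinset_univ]

lemma sum_prod_diag {β : Type} [Fintype β] {n : ℕ} (w : Fin n → β → ℝ)
    (hw1 : ∀ i, ∑ b, w i b = 1) (i : Fin n) (F : β → ℝ) :
    ∑ v : Vec β n, (∏ k, w k (v k)) * F (v i) = ∑ b, w i b * F b := by
  classical
  have key := sum_pi_prod n (fun k b => w k b * (if i = k then F b else 1))
  have h1 : ∀ v : Vec β n, (∏ k, w k (v k) * (if i = k then F (v k) else 1))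
      = (∏ k, w k (v k)) * F (v i) := by
    intro v
    rw [Finset.prod_mul_distrib, Finset.prod_ite_eq]
    simp
  have h2 : ∀ k, (∑ b, w k b * (if i = k then F b else 1))
      = if i = k then ∑ b, w i b * F b else 1 := by
    intro k
    by_cases h : i = k
    · subst h; simp
    · simp [h, hw1 k]
  calc ∑ v : Vec β n, (∏ k, w k (v k)) * F (v i)
      = ∑ v : Vec β n, ∏ k, w k (v k) * (if i = k then F (v k) else 1) :=
        Finset.sum_congr rfl fun v _ => (h1 v).symm
    _ = ∏ k, ∑ b, w k b * (if i = k then F b else 1) := key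
    _ = ∏ k, (if i = k then ∑ b, w i b * F b else 1) :=
        Finset.prod_congr rfl fun k _ => h2 k
    _ = ∑ b, w i b * F b := by rw [Finset.prod_ite_eq]; simp

lemma sum_prod_pair {β : Type} [Fintype β] {n : ℕ} (w : Fin n → β → ℝ)
    (hw1 : ∀ i, ∑ b, w i b = 1) (i j : Fin n) (hij : i ≠ j) (F G : β → ℝ) :
    ∑ v : Vec β n, (∏ k, w k (v k)) * (F (v i) * G (v j)) =
      (∑ b, w i b * F b) * (∑ b, w j b * G b) := by
  classical
  have key := sum_pi_prod n
    (fun k b => w k b * ((if i = k then F b else 1) * (if j = k then G b else 1)))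
  have h1 : ∀ v : Vec β n,
      (∏ k, w k (v k) * ((if i = k then F (v k) else 1) * (if j = k then G (v k) else 1)))
      = (∏ k, w k (v k)) * (F (v i) * G (v j)) := by
    intro v
    rw [Finset.prod_mul_distrib, Finset.prod_mul_distrib, Finset.prod_ite_eq,
      Finset.prod_ite_eq]
    simp
  have h2 : ∀ k, (∑ b, w k b * ((if i = k then F b else 1) * (if j = k then G b else 1)))
      = (if i = k then (∑ b, w i b * F b) else 1) *
        (if j = k then (∑ b, w j b * G b) else 1) := by
    intro k
    by_cases hik : i = k
    · subst hik
      simp [Ne.symm hij]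
    · by_cases hjk : j = k
      · subst hjk; simp [hik]
      · simp [hik, hjk, hw1 k]
  calc ∑ v : Vec β n, (∏ k, w k (v k)) * (F (v i) * G (v j))
      = ∑ v : Vec β n, ∏ k, w k (v k) *
          ((if i = k then F (v k) else 1) * (if j = k then G (v k) else 1)) :=
        Finset.sum_congr rfl fun v _ => (h1 v).symm
    _ = ∏ k, ∑ b, w k b * ((if i = k then F b else 1) * (if j = k then G b else 1)) := key
    _ = ∏ k, ((if i = k then (∑ b, w i b * F b) else 1) *
          (if j = k then (∑ b, w j b * G b) else 1)) :=
        Finset.prod_congr rfl fun k _ => h2 k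
    _ = _ := by
        rw [Finset.prod_mul_distrib, Finset.prod_ite_eq, Finset.prod_ite_eq]
        simp

lemma second_moment {β : Type} [Fintype β] {n : ℕ} (w : Fin n → β → ℝ)
    (hw0 : ∀ i b, 0 ≤ w i b) (hw1 : ∀ i, ∑ b, w i b = 1)
    (f : β → ℝ) (C : ℝ) (hf0 : ∀ b, 0 ≤ f b) (hf1 : ∀ b, f b ≤ C)
    (μ : Fin n → ℝ) (hμ : ∀ i, μ i = ∑ b, w i b * f b) :
    ∑ v : Vec β n, (∏ k, w k (v k)) * (∑ i, f (v i) - ∑ i, μ i)^2 ≤ n * C^2 := by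
  classical
  have hμ0 : ∀ i, 0 ≤ μ i := fun i => (hμ i) ▸
    Finset.sum_nonneg fun b _ => mul_nonneg (hw0 i b) (hf0 b)
  have hμC : ∀ i, μ i ≤ C := by
    intro i; rw [hμ i]
    calc ∑ b, w i b * f b ≤ ∑ b, w i b * C :=
          Finset.sum_le_sum fun b _ => mul_le_mul_of_nonneg_left (hf1 b) (hw0 i b)
      _ = C := by rw [← Finset.sum_mul, hw1 i, one_mul]
  have hzero : ∀ i, ∑ b, w i b * (f b - μ i) = 0 := by
    intro i
    have h : ∑ b, w i b * (f b - μ i)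
        = (∑ b, w i b * f b) - (∑ b, w i b) * μ i := by
      rw [Finset.sum_mul]
      rw [← Finset.sum_sub_distrib]
      exact Finset.sum_congr rfl fun b _ => by ring
    rw [h, hw1 i, one_mul, ← hμ i, sub_self]
  have hsq : ∀ v : Vec β n, (∑ i, f (v i) - ∑ i, μ i)^2
      = ∑ i, ∑ j, (f (v i) - μ i) * (f (v j) - μ j) := by
    intro v
    rw [← Finset.sum_sub_distrib, sq, Finset.sum_mul_sum]
  have hswap : ∑ v : Vec β n, (∏ k, w k (v k)) * (∑ i, f (v i) - ∑ i, μ i)^2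
      = ∑ i, ∑ j, ∑ v : Vec β n,
          (∏ k, w k (v k)) * ((f (v i) - μ i) * (f (v j) - μ j)) := by
    calc ∑ v : Vec β n, (∏ k, w k (v k)) * (∑ i, f (v i) - ∑ i, μ i)^2
        = ∑ v : Vec β n, ∑ i, ∑ j,
            (∏ k, w k (v k)) * ((f (v i) - μ i) * (f (v j) - μ j)) := by
          refine Finset.sum_congr rfl fun v _ => ?_
          rw [hsq v, Finset.mul_sum]
          exact Finset.sum_congr rfl fun i _ => Finset.mul_sum _ _ _
      _ = ∑ i, ∑ v : Vec β n, ∑ j,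
            (∏ k, w k (v k)) * ((f (v i) - μ i) * (f (v j) - μ j)) := Finset.sum_comm
      _ = _ := Finset.sum_congr rfl fun i _ => Finset.sum_comm
  have hterm : ∀ i j : Fin n, ∑ v : Vec β n,
      (∏ k, w k (v k)) * ((f (v i) - μ i) * (f (v j) - μ j))
      = if i = j then ∑ b, w i b * (f b - μ i)^2 else 0 := by
    intro i j
    by_cases h : i = j
    · subst h
      rw [if_pos rfl, ← sum_prod_diag w hw1 i (fun b => (f b - μ i)^2)]
      exact Finset.sum_congr rfl fun v _ => by ring
    · rw [if_neg h, sum_prod_pair w hw1 i j h (fun b => f b - μ i) (fun b => f b - μ j),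
        hzero i, hzero j, mul_zero]
  rw [hswap]
  calc ∑ i : Fin n, ∑ j, ∑ v : Vec β n,
        (∏ k, w k (v k)) * ((f (v i) - μ i) * (f (v j) - μ j))
      = ∑ i : Fin n, ∑ b, w i b * (f b - μ i)^2 := by
        refine Finset.sum_congr rfl fun i _ => ?_
        simp only [hterm]
        rw [Finset.sum_ite_eq]
        simp
    _ ≤ ∑ _i : Fin n, C^2 := by
        refine Finset.sum_le_sum fun i _ => ?_
        calc ∑ b, w i b * (f b - μ i)^2 ≤ ∑ b, w i b * C^2 := by
              refine Finset.sum_le_sum fun b _ => ?_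
              refine mul_le_mul_of_nonneg_left ?_ (hw0 i b)
              refine sq_le_sq' ?_ ?_
              · have := hf0 b; have := hμC i; linarith
              · have := hf1 b; have := hμ0 i; linarith
          _ = C^2 := by rw [← Finset.sum_mul, hw1 i, one_mul]
    _ = n * C^2 := by simp [Finset.card_univ, mul_comm]

lemma markov_aux {Ω : Type} [Fintype Ω] (w : Ω → ℝ) (hw0 : ∀ a, 0 ≤ w a)
    (h : Ω → ℝ) (hh0 : ∀ a, 0 ≤ h a) (s : Set Ω) (c : ℝ) (hc : 0 < c)
    (hs : ∀ a ∈ s, c ≤ h a) :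
    ∑ a, s.indicator w a ≤ (∑ a, w a * h a) / c := by
  classical
  rw [le_div_iff₀ hc, Finset.sum_mul]
  refine Finset.sum_le_sum fun a _ => ?_
  by_cases ha : a ∈ s
  · rw [Set.indicator_of_mem ha]
    exact mul_le_mul_of_nonneg_left (hs a ha) (hw0 a)
  · rw [Set.indicator_of_notMem ha, zero_mul]
    exact mul_nonneg (hw0 a) (hh0 a)

lemma pLimsup_le_of_forall {Ω : ℕ → Type} (p : ∀ n, PMF (Ω n)) (Z : ∀ n, Ω n → ℝ)
    (hZ0 : ∀ n ω, 0 ≤ Z n ω) (L : ℝ)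
    (h : ∀ ε > (0:ℝ), Tendsto (fun n => prSet (p n) {ω | L + ε < Z n ω}) atTop (nhds 0)) :
    pLimsup p Z ≤ L := by
  have hbdd : BddBelow {a : ℝ |
      Tendsto (fun n => prSet (p n) {ω | a < Z n ω}) atTop (nhds 0)} := by
    refine ⟨0, fun α hα => ?_⟩
    by_contra hneg
    push_neg at hneg
    have huniv : ∀ n, prSet (p n) {ω | α < Z n ω} = 1 := by
      intro n
      have he : {ω | α < Z n ω} = Set.univ := by
        ext ω
        simp only [Set.mem_setOf_eq, Set.mem_univ, iff_true]
        exact lt_of_lt_of_le hneg (hZ0 n ω)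
      rw [he, prSet_univ]
    have h1 : Tendsto (fun _ : ℕ => (1 : ENNReal)) atTop (nhds 0) := by
      simpa [huniv] using hα
    exact zero_ne_one (tendsto_nhds_unique h1 tendsto_const_nhds)
  refine le_of_forall_pos_le_add fun ε hε => ?_
  exact csInf_le hbdd (h ε hε)

lemma limsup_expect_le_pLimsup {Ω : ℕ → Type} [∀ n, Fintype (Ω n)]
    (p : ∀ n, PMF (Ω n)) (Z : ∀ n, Ω n → ℝ) (C : ℝ) (hC : 0 ≤ C)
    (hZ0 : ∀ n ω, 0 ≤ Z n ω) (hZC : ∀ n ω, Z n ω ≤ C)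
    (E : ℕ → ℝ) (hE : ∀ n, expect (p n) (Z n) = E n) :
    limsup E atTop ≤ pLimsup p Z := by
  classical
  have hCmem : Tendsto (fun n => prSet (p n) {ω | C < Z n ω}) atTop (nhds 0) := by
    have he : ∀ n, prSet (p n) {ω | C < Z n ω} = 0 := by
      intro n
      have h : {ω | C < Z n ω} = (∅ : Set (Ω n)) := by
        ext ω
        simp only [Set.mem_setOf_eq, Set.mem_empty_iff_false, iff_false, not_lt]
        exact hZC n ω
      rw [h, prSet_empty]
    simp only [he]
    exact tendsto_const_nhds
  refine le_csInf ⟨C, hCmem⟩ ?_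
  rintro α hα
  have hα0 : (0:ℝ) ≤ α := by
    by_contra hneg
    push_neg at hneg
    have huniv : ∀ n, prSet (p n) {ω | α < Z n ω} = 1 := by
      intro n
      have he : {ω | α < Z n ω} = Set.univ := by
        ext ω
        simp only [Set.mem_setOf_eq, Set.mem_univ, iff_true]
        exact lt_of_lt_of_le hneg (hZ0 n ω)
      rw [he, prSet_univ]
    have h1 : Tendsto (fun _ : ℕ => (1 : ENNReal)) atTop (nhds 0) := by
      simpa [huniv] using hα
    exact zero_ne_one (tendsto_nhds_unique h1 tendsto_const_nhds)
  set r := fun n => (prSet (p n) {ω | α < Z n ω}).toReal with hr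
  have hrt : Tendsto r atTop (nhds (0:ℝ)) := by
    have := (ENNReal.tendsto_toReal (a := 0) (by simp)).comp hα
    rw [ENNReal.toReal_zero] at this
    exact this
  have hle : ∀ n, E n ≤ α + C * r n := by
    intro n
    rw [← hE n]
    have h1 : ∀ ω, Z n ω ≤ α + C *
        Set.indicator {ω | α < Z n ω} (fun _ => (1:ℝ)) ω := by
      intro ω
      by_cases h : ω ∈ {ω | α < Z n ω}
      · rw [Set.indicator_of_mem h]
        have := hZC n ω; simp only [mul_one]; linarith
      · rw [Set.indicator_of_notMem h]
        simp only [Set.mem_setOf_eq, not_lt] at h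
        linarith
    calc expect (p n) (Z n)
        ≤ expect (p n) (fun ω => α + C *
            Set.indicator {ω | α < Z n ω} (fun _ => (1:ℝ)) ω) := expect_le_expect _ h1
      _ = α + C * r n := by
          rw [hr]
          simp only [expect_eq_sum, prSet_toReal, mul_add, Finset.sum_add_distrib]
          congr 1
          · rw [← Finset.sum_mul, sum_w_eq_one, one_mul]
          · rw [Finset.mul_sum]
            refine Finset.sum_congr rfl fun a _ => ?_
            by_cases h : a ∈ {ω | α < Z n ω} <;>
              simp [Set.indicator_of_mem, Set.indicator_of_notMem, h] <;> ring
  have hcb : atTop.IsCoboundedUnder (· ≤ ·) E := by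
    refine Filter.IsBoundedUnder.isCoboundedUnder_le ⟨0, ?_⟩
    refine eventually_map.mpr (Eventually.of_forall fun n => ?_)
    rw [← hE n]
    exact expect_nonneg _ (hZ0 n)
  refine le_of_forall_pos_le_add fun δ hδ => ?_
  have hCr : Tendsto (fun n => C * r n) atTop (nhds 0) := by
    have := hrt.const_mul C
    simpa using this
  have hev : ∀ᶠ n in atTop, C * r n < δ := hCr.eventually_lt_const hδ
  refine limsup_le_of_le hcb ?_
  filter_upwards [hev] with n hn
  have := hle n
  linarith

lemma expect_comp_map {α β : Type} [Fintype α] [Fintype β] (p : PMF α) (h : α → β)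
    (f : β → ℝ) (Z : α → ℝ) (hZ : ∀ a, Z a = f (h a)) :
    expect p Z = expect (p.map h) f := by
  have h1 : Z = fun a => f (h a) := funext hZ
  rw [h1, ← expect_map]

lemma expect_procDist {𝒜 𝒰 𝒮e 𝒮 𝒮d 𝒳 𝒴 𝒵 Sh : Type}
    [Fintype 𝒜] [Fintype 𝒰] [Fintype 𝒮e] [Fintype 𝒮] [Fintype 𝒮d] [Fintype 𝒳]
    [Fintype 𝒴] [Fintype 𝒵] [Fintype 𝒵] [Fintype Sh]
    (dn : ∀ n, Vec 𝒮 n → Vec Sh n → ℝ) (d : 𝒮 → Sh → ℝ)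
    (hdn : ∀ n (s : Vec 𝒮 n) (sh : Vec Sh n), dn n s sh = ∑ i : Fin n, d (s i) (sh i))
    (g : ∀ n, Vec 𝒳 n → Vec 𝒜 n → Vec 𝒮e n → Vec 𝒵 n → Vec Sh n) (n : ℕ)
    (p : PMF (Vec 𝒜 n × Vec 𝒰 n × Vec 𝒮e n × Vec 𝒮 n × Vec 𝒮d n ×
      Vec 𝒳 n × Vec 𝒴 n × Vec 𝒵 n)) :
    expect p (procDistRV dn g n) = ∑ i : Fin n,
      expect (p.map (fun t => (t.2.2.2.1 i, g n t.2.2.2.2.2.1 t.1 t.2.2.1 t.2.2.2.2.2.2.2 i)))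
        (fun r => d r.1 r.2) := by
  classical
  have h1 : procDistRV dn g n = fun t : Vec 𝒜 n × Vec 𝒰 n × Vec 𝒮e n × Vec 𝒮 n ×
      Vec 𝒮d n × Vec 𝒳 n × Vec 𝒴 n × Vec 𝒵 n =>
      ∑ i : Fin n, d (t.2.2.2.1 i) (g n t.2.2.2.2.2.1 t.1 t.2.2.1 t.2.2.2.2.2.2.2 i) :=
    funext fun t => hdn n _ _
  rw [h1, expect_sum]
  refine Finset.sum_congr rfl fun i _ => ?_
  rw [expect_map]

/-- **Lemma 2** (memoryless inputs do not increase the distortion). Under memoryless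
states and channel and an additive bounded distortion, if the reproduction process `Ŝ*`
induced by a memoryless (product-form) input process has, coordinatewise, the same joint
law with the state as the reproduction process `Ŝ` of an arbitrary admissible input
process, and the per-coordinate pairs `(S_i, Ŝ*_i)` are independent, then
`D̄(S,Ŝ*) ≤ D̄(S,Ŝ)` and `D(S,Ŝ*) = D(S,Ŝ)`; in fact
`D̄(S,Ŝ*) = limsup_n (1/n) Σ_i E[d(S_i,Ŝ_i)] = D(S,Ŝ)`. -/
theorem memoryless_input_distortion
    (𝒜 𝒰 𝒰' 𝒳 𝒮e 𝒮 𝒮d 𝒴 𝒵 Sh : Type)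
    [Fintype 𝒜] [Fintype 𝒰] [Fintype 𝒰'] [Fintype 𝒳] [Fintype 𝒮e] [Fintype 𝒮]
    [Fintype 𝒮d] [Fintype 𝒴] [Fintype 𝒵] [Fintype Sh]
    (q : ∀ n, Vec 𝒜 n → PMF (Vec 𝒮e n × Vec 𝒮 n × Vec 𝒮d n))
    (W : ∀ n, Vec 𝒳 n × Vec 𝒮 n → PMF (Vec 𝒴 n × Vec 𝒵 n))
    (dn : ∀ n, Vec 𝒮 n → Vec Sh n → ℝ)
    (qs : ℕ → 𝒜 → PMF (𝒮e × 𝒮 × 𝒮d)) (Wc : ℕ → 𝒳 × 𝒮 → PMF (𝒴 × 𝒵))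
    (d : 𝒮 → Sh → ℝ) (Dmax : ℝ)
    (hq : ∀ n (a : Vec 𝒜 n) (se : Vec 𝒮e n) (s : Vec 𝒮 n) (sd : Vec 𝒮d n),
      (q n a) (se, s, sd) = ∏ i : Fin n, (qs i.1 (a i)) (se i, s i, sd i))
    (hW : ∀ n (x : Vec 𝒳 n) (s : Vec 𝒮 n) (y : Vec 𝒴 n) (z : Vec 𝒵 n),
      (W n (x, s)) (y, z) = ∏ i : Fin n, (Wc i.1 (x i, s i)) (y i, z i))
    (hdn : ∀ n (s : Vec 𝒮 n) (sh : Vec Sh n), dn n s sh = ∑ i : Fin n, d (s i) (sh i))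
    (hd₀ : ∀ s sh, 0 ≤ d s sh) (hd₁ : ∀ s sh, d s sh ≤ Dmax)
    (g : ∀ n, Vec 𝒳 n → Vec 𝒜 n → Vec 𝒮e n → Vec 𝒵 n → Vec Sh n)
    -- the arbitrary admissible input process
    (PA : ∀ n, PMF (Vec 𝒜 n))
    (PU : ∀ n, Vec 𝒜 n × Vec 𝒮e n → PMF (Vec 𝒰 n))
    (PX : ∀ n, Vec 𝒰 n × Vec 𝒮e n → PMF (Vec 𝒳 n))
    -- the memoryless (product-form) input process
    (PAs : ∀ n, PMF (Vec 𝒜 n))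
    (PUs : ∀ n, Vec 𝒜 n × Vec 𝒮e n → PMF (Vec 𝒰' n))
    (PXs : ∀ n, Vec 𝒰' n × Vec 𝒮e n → PMF (Vec 𝒳 n))
    (PA1 : ℕ → PMF 𝒜) (PU1 : ℕ → 𝒜 → 𝒮e → PMF 𝒰') (PX1 : ℕ → 𝒰' → 𝒮e → PMF 𝒳)
    (hPAs : ∀ n (a : Vec 𝒜 n), (PAs n) a = ∏ i : Fin n, (PA1 i.1) (a i))
    (hPUs : ∀ n (a : Vec 𝒜 n) (se : Vec 𝒮e n) (u : Vec 𝒰' n),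
      (PUs n (a, se)) u = ∏ i : Fin n, (PU1 i.1 (a i) (se i)) (u i))
    (hPXs : ∀ n (u : Vec 𝒰' n) (se : Vec 𝒮e n) (x : Vec 𝒳 n),
      (PXs n (u, se)) x = ∏ i : Fin n, (PX1 i.1 (u i) (se i)) (x i))
    -- the per-coordinate joint laws of `(S_i, Ŝ*_i)` and `(S_i, Ŝ_i)` coincide
    (hmarg : ∀ n (i : Fin n),
      (procJoint q W PAs PUs PXs n).map
        (fun t => (t.2.2.2.1 i, g n t.2.2.2.2.2.1 t.1 t.2.2.1 t.2.2.2.2.2.2.2 i)) =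
      (procJoint q W PA PU PX n).map
        (fun t => (t.2.2.2.1 i, g n t.2.2.2.2.2.1 t.1 t.2.2.1 t.2.2.2.2.2.2.2 i)))
    -- the pairs `(S_i, Ŝ*_i)` are independent across coordinates
    (hindep : ∀ n (v : Vec (𝒮 × Sh) n),
      ((procJoint q W PAs PUs PXs n).map
        (fun t => fun i : Fin n =>
          (t.2.2.2.1 i, g n t.2.2.2.2.2.1 t.1 t.2.2.1 t.2.2.2.2.2.2.2 i))) v =
      ∏ i : Fin n, ((procJoint q W PAs PUs PXs n).map
        (fun t => (t.2.2.2.1 i, g n t.2.2.2.2.2.1 t.1 t.2.2.1 t.2.2.2.2.2.2.2 i))) (v i)) :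
    pLimsup (fun n => procJoint q W PAs PUs PXs n)
        (fun n t => (n : ℝ)⁻¹ * procDistRV dn g n t) ≤
      pLimsup (fun n => procJoint q W PA PU PX n)
        (fun n t => (n : ℝ)⁻¹ * procDistRV dn g n t) ∧
    limsup (fun n : ℕ => (n : ℝ)⁻¹ *
        expect (procJoint q W PAs PUs PXs n) (procDistRV dn g n)) atTop =
      limsup (fun n : ℕ => (n : ℝ)⁻¹ *
        expect (procJoint q W PA PU PX n) (procDistRV dn g n)) atTop ∧
    pLimsup (fun n => procJoint q W PAs PUs PXs n)
        (fun n t => (n : ℝ)⁻¹ * procDistRV dn g n t) =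
      limsup (fun n : ℕ => (n : ℝ)⁻¹ * ∑ i : Fin n,
        expect ((procJoint q W PA PU PX n).map
          (fun t => (t.2.2.2.1 i, g n t.2.2.2.2.2.1 t.1 t.2.2.1 t.2.2.2.2.2.2.2 i)))
          (fun p => d p.1 p.2)) atTop ∧
    pLimsup (fun n => procJoint q W PAs PUs PXs n)
        (fun n t => (n : ℝ)⁻¹ * procDistRV dn g n t) =
      limsup (fun n : ℕ => (n : ℝ)⁻¹ *
        expect (procJoint q W PA PU PX n) (procDistRV dn g n)) atTop := by
  classical
  -- nonemptiness gives 0 ≤ Dmax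
  obtain ⟨t0, _⟩ := (procJoint q W PA PU PX 1).support_nonempty
  have h0D : (0:ℝ) ≤ Dmax :=
    le_trans (hd₀ (t0.2.2.2.1 ⟨0, one_pos⟩)
      (g 1 t0.2.2.2.2.2.1 t0.1 t0.2.2.1 t0.2.2.2.2.2.2.2 ⟨0, one_pos⟩)) (hd₁ _ _)
  -- bounds on the additive distortion
  have hD0 : ∀ (n : ℕ) (s : Vec 𝒮 n) (sh : Vec Sh n), 0 ≤ dn n s sh := by
    intro n s sh; rw [hdn]; exact Finset.sum_nonneg fun i _ => hd₀ _ _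
  have hDn : ∀ (n : ℕ) (s : Vec 𝒮 n) (sh : Vec Sh n), dn n s sh ≤ n * Dmax := by
    intro n s sh; rw [hdn]
    calc ∑ i : Fin n, d (s i) (sh i) ≤ ∑ _i : Fin n, Dmax :=
          Finset.sum_le_sum fun i _ => hd₁ _ _
      _ = n * Dmax := by simp [Finset.card_univ, mul_comm]
  have hkeyb : ∀ (n : ℕ) (x : ℝ), 0 ≤ x → x ≤ n * Dmax → (n : ℝ)⁻¹ * x ≤ Dmax := by
    intro n x hx h
    cases n with
    | zero => simpa using h0D
    | succ k =>
        have hpos : (0:ℝ) < ((k+1 : ℕ) : ℝ) := by positivity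
        calc ((k+1:ℕ) : ℝ)⁻¹ * x ≤ ((k+1:ℕ):ℝ)⁻¹ * (((k+1:ℕ):ℝ) * Dmax) :=
              mul_le_mul_of_nonneg_left h (by positivity)
          _ = Dmax := by
              rw [← mul_assoc, inv_mul_cancel₀ (ne_of_gt hpos), one_mul]
  -- bounds on Z for the two processes
  have hZ0s : ∀ (n : ℕ) (t : Vec 𝒜 n × Vec 𝒰' n × Vec 𝒮e n × Vec 𝒮 n × Vec 𝒮d n ×
      Vec 𝒳 n × Vec 𝒴 n × Vec 𝒵 n), 0 ≤ (n : ℝ)⁻¹ * procDistRV dn g n t := by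
    intro n t
    exact mul_nonneg (by positivity) (hD0 n _ _)
  have hZDs : ∀ (n : ℕ) (t : Vec 𝒜 n × Vec 𝒰' n × Vec 𝒮e n × Vec 𝒮 n × Vec 𝒮d n ×
      Vec 𝒳 n × Vec 𝒴 n × Vec 𝒵 n), (n : ℝ)⁻¹ * procDistRV dn g n t ≤ Dmax := by
    intro n t
    exact hkeyb n _ (hD0 n _ _) (hDn n _ _)
  have hZ0a : ∀ (n : ℕ) (t : Vec 𝒜 n × Vec 𝒰 n × Vec 𝒮e n × Vec 𝒮 n × Vec 𝒮d n ×
      Vec 𝒳 n × Vec 𝒴 n × Vec 𝒵 n), 0 ≤ (n : ℝ)⁻¹ * procDistRV dn g n t := by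
    intro n t
    exact mul_nonneg (by positivity) (hD0 n _ _)
  have hZDa : ∀ (n : ℕ) (t : Vec 𝒜 n × Vec 𝒰 n × Vec 𝒮e n × Vec 𝒮 n × Vec 𝒮d n ×
      Vec 𝒳 n × Vec 𝒴 n × Vec 𝒵 n), (n : ℝ)⁻¹ * procDistRV dn g n t ≤ Dmax := by
    intro n t
    exact hkeyb n _ (hD0 n _ _) (hDn n _ _)
  -- per-coordinate means and their Cesàro averages
  let μ : ∀ n : ℕ, Fin n → ℝ := fun n i =>
    expect ((procJoint q W PA PU PX n).map
      (fun t => (t.2.2.2.1 i, g n t.2.2.2.2.2.1 t.1 t.2.2.1 t.2.2.2.2.2.2.2 i)))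
      (fun r => d r.1 r.2)
  let m : ℕ → ℝ := fun n => (n : ℝ)⁻¹ * ∑ i : Fin n, μ n i
  let L : ℝ := limsup m atTop
  have hμ0 : ∀ (n : ℕ) (i : Fin n), 0 ≤ μ n i := fun n i =>
    expect_nonneg _ fun r => hd₀ _ _
  have hμD : ∀ (n : ℕ) (i : Fin n), μ n i ≤ Dmax := fun n i =>
    le_trans (expect_le_expect _ fun r => hd₁ r.1 r.2) (le_of_eq (expect_const _ _))
  have hmD : ∀ n, m n ≤ Dmax := by
    intro n
    refine hkeyb n _ (Finset.sum_nonneg fun i _ => hμ0 n i) ?_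
    calc ∑ i : Fin n, μ n i ≤ ∑ _i : Fin n, Dmax := Finset.sum_le_sum fun i _ => hμD n i
      _ = n * Dmax := by simp [Finset.card_univ, mul_comm]
  -- expectations of the distortion
  have hE_arb : ∀ n, expect (procJoint q W PA PU PX n) (procDistRV dn g n)
      = ∑ i : Fin n, μ n i := fun n => expect_procDist dn d hdn g n _
  have hE_star : ∀ n, expect (procJoint q W PAs PUs PXs n) (procDistRV dn g n)
      = ∑ i : Fin n, μ n i := by
    intro n
    rw [expect_procDist dn d hdn g n _]
    exact Finset.sum_congr rfl fun i _ => by rw [hmarg n i]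
  have hm_star : ∀ n, expect (procJoint q W PAs PUs PXs n)
      (fun t => (n : ℝ)⁻¹ * procDistRV dn g n t) = m n := by
    intro n; rw [expect_smul, hE_star n]
  have hm_arb : ∀ n, expect (procJoint q W PA PU PX n)
      (fun t => (n : ℝ)⁻¹ * procDistRV dn g n t) = m n := by
    intro n; rw [expect_smul, hE_arb n]
  -- the lower bound L ≤ pLimsup for both processes
  have hA_star : L ≤ pLimsup (fun n => procJoint q W PAs PUs PXs n)
      (fun n t => (n : ℝ)⁻¹ * procDistRV dn g n t) :=
    limsup_expect_le_pLimsup (fun n => procJoint q W PAs PUs PXs n)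
      (fun n t => (n : ℝ)⁻¹ * procDistRV dn g n t) Dmax h0D hZ0s hZDs m hm_star
  have hA_arb : L ≤ pLimsup (fun n => procJoint q W PA PU PX n)
      (fun n t => (n : ℝ)⁻¹ * procDistRV dn g n t) :=
    limsup_expect_le_pLimsup (fun n => procJoint q W PA PU PX n)
      (fun n t => (n : ℝ)⁻¹ * procDistRV dn g n t) Dmax h0D hZ0a hZDa m hm_arb
  -- the concentration upper bound for the memoryless process
  have hB : pLimsup (fun n => procJoint q W PAs PUs PXs n)
      (fun n t => (n : ℝ)⁻¹ * procDistRV dn g n t) ≤ L := by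
    refine pLimsup_le_of_forall _ _ hZ0s L ?_
    intro ε hε
    have hL2 : ∀ᶠ n in atTop, m n < L + ε / 2 := by
      refine eventually_lt_of_limsup_lt ?_ ⟨Dmax, eventually_map.mpr
        (Eventually.of_forall fun n => hmD n)⟩
      have h : L < L + ε / 2 := by linarith
      exact h
    have hkey : ∀ n : ℕ, 1 ≤ n → m n < L + ε / 2 →
        (prSet (procJoint q W PAs PUs PXs n)
          {t | L + ε < (n : ℝ)⁻¹ * procDistRV dn g n t}).toReal
          ≤ (Dmax ^ 2 / (ε / 2) ^ 2) * (n : ℝ)⁻¹ := by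
      intro n hn1 hn2
      have hncast : (0:ℝ) < (n : ℝ) := by exact_mod_cast Nat.pos_of_ne_zero (by omega)
      have hμw : ∀ i : Fin n, μ n i = ∑ b : 𝒮 × Sh,
          (((procJoint q W PAs PUs PXs n).map
            (fun t => (t.2.2.2.1 i, g n t.2.2.2.2.2.1 t.1 t.2.2.1 t.2.2.2.2.2.2.2 i))) b).toReal
            * ((fun b : 𝒮 × Sh => d b.1 b.2) b) := by
        intro i
        have h1 : μ n i = expect ((procJoint q W PA PU PX n).map
            (fun t => (t.2.2.2.1 i, g n t.2.2.2.2.2.1 t.1 t.2.2.1 t.2.2.2.2.2.2.2 i)))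
            (fun r => d r.1 r.2) := rfl
        rw [h1, ← hmarg n i, expect_eq_sum]
      have hsm : expect (procJoint q W PAs PUs PXs n)
          (fun t => ((n : ℝ)⁻¹ * procDistRV dn g n t - m n) ^ 2)
          ≤ (n : ℝ)⁻¹ * Dmax ^ 2 := by
        have hcomp := expect_comp_map (procJoint q W PAs PUs PXs n)
          (fun t => fun i : Fin n =>
            (t.2.2.2.1 i, g n t.2.2.2.2.2.1 t.1 t.2.2.1 t.2.2.2.2.2.2.2 i))
          (fun v : Vec (𝒮 × Sh) n =>
            ((n : ℝ)⁻¹ * ∑ i : Fin n, d (v i).1 (v i).2 - m n) ^ 2)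
          (fun t => ((n : ℝ)⁻¹ * procDistRV dn g n t - m n) ^ 2)
          (by
            intro t
            simp only []
            have h := hdn n t.2.2.2.1 (g n t.2.2.2.2.2.1 t.1 t.2.2.1 t.2.2.2.2.2.2.2)
            rw [show procDistRV dn g n t
              = dn n t.2.2.2.1 (g n t.2.2.2.2.2.1 t.1 t.2.2.1 t.2.2.2.2.2.2.2) from rfl, h])
        rw [hcomp, expect_eq_sum]
        have hwv : ∀ v : Vec (𝒮 × Sh) n,
            (((procJoint q W PAs PUs PXs n).map
              (fun t => fun i : Fin n =>
                (t.2.2.2.1 i, g n t.2.2.2.2.2.1 t.1 t.2.2.1 t.2.2.2.2.2.2.2 i))) v).toReal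
            = ∏ i : Fin n, (((procJoint q W PAs PUs PXs n).map
                (fun t => (t.2.2.2.1 i,
                  g n t.2.2.2.2.2.1 t.1 t.2.2.1 t.2.2.2.2.2.2.2 i))) (v i)).toReal := by
          intro v
          rw [hindep n v, ENNReal.toReal_prod]
        calc ∑ v : Vec (𝒮 × Sh) n,
              (((procJoint q W PAs PUs PXs n).map
                (fun t => fun i : Fin n =>
                  (t.2.2.2.1 i, g n t.2.2.2.2.2.1 t.1 t.2.2.1 t.2.2.2.2.2.2.2 i))) v).toReal *
                ((n : ℝ)⁻¹ * ∑ i : Fin n, d (v i).1 (v i).2 - m n) ^ 2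
            = ∑ v : Vec (𝒮 × Sh) n,
                ((n : ℝ)⁻¹)^2 * ((∏ i : Fin n, (((procJoint q W PAs PUs PXs n).map
                  (fun t => (t.2.2.2.1 i,
                    g n t.2.2.2.2.2.1 t.1 t.2.2.1 t.2.2.2.2.2.2.2 i))) (v i)).toReal) *
                  ((∑ i : Fin n, d (v i).1 (v i).2) - ∑ i : Fin n, μ n i) ^ 2) := by
              refine Finset.sum_congr rfl fun v _ => ?_
              rw [hwv v]
              have hmn : m n = (n : ℝ)⁻¹ * ∑ i : Fin n, μ n i := rfl
              rw [hmn]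
              ring
          _ = ((n : ℝ)⁻¹)^2 * ∑ v : Vec (𝒮 × Sh) n,
                (∏ i : Fin n, (((procJoint q W PAs PUs PXs n).map
                  (fun t => (t.2.2.2.1 i,
                    g n t.2.2.2.2.2.1 t.1 t.2.2.1 t.2.2.2.2.2.2.2 i))) (v i)).toReal) *
                  ((∑ i : Fin n, d (v i).1 (v i).2) - ∑ i : Fin n, μ n i) ^ 2 := by
              rw [Finset.mul_sum]
          _ ≤ ((n : ℝ)⁻¹)^2 * (n * Dmax ^ 2) := by
              refine mul_le_mul_of_nonneg_left ?_ (by positivity)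
              exact second_moment
                (fun i b => (((procJoint q W PAs PUs PXs n).map
                  (fun t => (t.2.2.2.1 i,
                    g n t.2.2.2.2.2.1 t.1 t.2.2.1 t.2.2.2.2.2.2.2 i))) b).toReal)
                (fun i b => ENNReal.toReal_nonneg) (fun i => sum_w_eq_one _)
                (fun b => d b.1 b.2) Dmax (fun b => hd₀ _ _) (fun b => hd₁ _ _)
                (fun i => μ n i) hμw
          _ = (n : ℝ)⁻¹ * Dmax ^ 2 := by
              field_simp
      have hmem : ∀ t : Vec 𝒜 n × Vec 𝒰' n × Vec 𝒮e n × Vec 𝒮 n × Vec 𝒮d n ×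
          Vec 𝒳 n × Vec 𝒴 n × Vec 𝒵 n,
          t ∈ {t | L + ε < (n : ℝ)⁻¹ * procDistRV dn g n t} →
          (ε / 2) ^ 2 ≤ ((n : ℝ)⁻¹ * procDistRV dn g n t - m n) ^ 2 := by
        intro t ht
        have h1 : L + ε < (n : ℝ)⁻¹ * procDistRV dn g n t := ht
        have h2 : ε / 2 ≤ (n : ℝ)⁻¹ * procDistRV dn g n t - m n := by linarith
        exact pow_le_pow_left₀ (by positivity) h2 2
      have hmar := markov_aux (fun t : Vec 𝒜 n × Vec 𝒰' n × Vec 𝒮e n × Vec 𝒮 n ×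
          Vec 𝒮d n × Vec 𝒳 n × Vec 𝒴 n × Vec 𝒵 n => ((procJoint q W PAs PUs PXs n) t).toReal)
        (fun t => ENNReal.toReal_nonneg)
        (fun t => ((n : ℝ)⁻¹ * procDistRV dn g n t - m n) ^ 2)
        (fun t => sq_nonneg _)
        {t | L + ε < (n : ℝ)⁻¹ * procDistRV dn g n t}
        ((ε / 2) ^ 2) (by positivity) hmem
      calc (prSet (procJoint q W PAs PUs PXs n)
            {t | L + ε < (n : ℝ)⁻¹ * procDistRV dn g n t}).toReal
          = ∑ t, Set.indicator {t | L + ε < (n : ℝ)⁻¹ * procDistRV dn g n t}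
              (fun t => ((procJoint q W PAs PUs PXs n) t).toReal) t := prSet_toReal _ _
        _ ≤ (∑ t, ((procJoint q W PAs PUs PXs n) t).toReal *
              ((n : ℝ)⁻¹ * procDistRV dn g n t - m n) ^ 2) / ((ε / 2) ^ 2) := hmar
        _ = expect (procJoint q W PAs PUs PXs n)
              (fun t => ((n : ℝ)⁻¹ * procDistRV dn g n t - m n) ^ 2) / ((ε / 2) ^ 2) := by
            rw [expect_eq_sum]
        _ ≤ ((n : ℝ)⁻¹ * Dmax ^ 2) / ((ε / 2) ^ 2) := by gcongr
        _ = (Dmax ^ 2 / (ε / 2) ^ 2) * (n : ℝ)⁻¹ := by ring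
    have hev : ∀ᶠ n : ℕ in atTop,
        (prSet (procJoint q W PAs PUs PXs n)
          {t | L + ε < (n : ℝ)⁻¹ * procDistRV dn g n t}).toReal
        ≤ (Dmax ^ 2 / (ε / 2) ^ 2) * (n : ℝ)⁻¹ := by
      filter_upwards [eventually_ge_atTop 1, hL2] with n h1 h2
      exact hkey n h1 h2
    have hg : Tendsto (fun n : ℕ => (Dmax ^ 2 / (ε / 2) ^ 2) * (n : ℝ)⁻¹) atTop
        (nhds 0) := by
      have h := (tendsto_inv_atTop_nhds_zero_nat (𝕜 := ℝ)).const_mul (Dmax ^ 2 / (ε / 2) ^ 2)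
      simpa using h
    have hr : Tendsto (fun n : ℕ => (prSet (procJoint q W PAs PUs PXs n)
        {t | L + ε < (n : ℝ)⁻¹ * procDistRV dn g n t}).toReal) atTop (nhds 0) :=
      squeeze_zero' (Eventually.of_forall fun n => ENNReal.toReal_nonneg) hev hg
    have hofr := ENNReal.tendsto_ofReal hr
    simp only [ENNReal.ofReal_zero] at hofr
    refine Filter.Tendsto.congr (fun n => ?_) hofr
    exact ENNReal.ofReal_toReal (prSet_ne_top _ _)
  refine ⟨le_trans hB hA_arb, ?_, ?_, ?_⟩
  · have h1 : (fun n : ℕ => (n : ℝ)⁻¹ *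
        expect (procJoint q W PAs PUs PXs n) (procDistRV dn g n))
        = fun n : ℕ => (n : ℝ)⁻¹ *
          expect (procJoint q W PA PU PX n) (procDistRV dn g n) :=
      funext fun n => by rw [hE_star n, hE_arb n]
    rw [h1]
  · exact le_antisymm hB hA_star
  · have h4 : (fun n : ℕ => (n : ℝ)⁻¹ *
        expect (procJoint q W PA PU PX n) (procDistRV dn g n)) = m :=
      funext fun n => by rw [hE_arb n]
    rw [h4]
    exact le_antisymm hB hA_star


end ISAC
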